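/- arXiv:0909.0987 — 8 statements merged into one kernel-verified Lean document; each statement's English description precedes it below -/
import Mathlib

section
/- (Krein) Let A belong to the class Sym. Then there exists μ ∈ H such that S_μ ∩ ℝ = ∅; that is, for every x ∈ ℝ there exists ψ ∈ ker(A* − xI) with ⟨μ, ψ⟩ ≠ 0. -/
open Complex ComplexConjugate Filter

local notation "⟪" x ", " y "⟫" => @inner ℂ _ _ x y

noncomputable section

variable {H : Type*} [NormedAddCommGroup H] [InnerProductSpace ℂ H] [CompleteSpace H]

/-- The defect (deficiency) subspace `ker(A* - z·I)`, described via the graph of the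
adjoint: `ψ ∈ ker(A* - z·I)` iff `ψ ∈ dom(A*)` and `A* ψ = z • ψ`. -/
def defectSet (A : H →ₗ.[ℂ] H) (z : ℂ) : Set H :=
  {ψ : H | (ψ, z • ψ) ∈ A.adjoint.graph}

/-- The class `Sym`: simple, regular, closed, densely defined symmetric operators
with deficiency indices (1,1). -/
structure IsSymClass (A : H →ₗ.[ℂ] H) : Prop where
  dense : Dense (A.domain : Set H)
  symmetric : ∀ φ ψ : A.domain, (inner ℂ (A φ) (ψ : H) : ℂ) = inner ℂ (φ : H) (A ψ)
  closed : A.IsClosed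
  regular : ∀ x : ℝ, ∃ c > 0, ∀ φ : A.domain, c * ‖(φ : H)‖ ≤ ‖A φ - (x : ℂ) • (φ : H)‖
  deficiency : ∀ z : ℂ, z.im ≠ 0 → ∃ ψ₀ ∈ defectSet A z, ψ₀ ≠ 0 ∧
      ∀ ψ ∈ defectSet A z, ∃ c : ℂ, ψ = c • ψ₀
  simple : (Submodule.span ℂ (⋃ z ∈ {z : ℂ | z.im ≠ 0}, defectSet A z)).topologicalClosure = ⊤

/-- `B` is a selfadjoint extension of `A`. -/
def IsSelfAdjointExt (A B : H →ₗ.[ℂ] H) : Prop :=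
  A ≤ B ∧ B.adjoint = B

/-- The spectrum of a partially defined operator `B`: the set of `z` such that
`B - z·I : dom(B) → H` is not bijective. -/
def pSpec (B : H →ₗ.[ℂ] H) : Set ℂ :=
  {z : ℂ | ¬ Function.Bijective fun φ : B.domain => B φ - z • (φ : H)}

/-- `A - z` as a linear map on the domain of `A`. -/
def opT (A : H →ₗ.[ℂ] H) (z : ℂ) : A.domain →ₗ[ℂ] H :=
  A.toFun - z • A.domain.subtype

omit [CompleteSpace H] in
lemma opT_apply (A : H →ₗ.[ℂ] H) (z : ℂ) (φ : A.domain) :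
    opT A z φ = A φ - z • (φ : H) := rfl

lemma mem_defect_of_forall (A : H →ₗ.[ℂ] H) (hd : Dense (A.domain : Set H)) (z : ℂ) (η : H)
    (h : ∀ φ : A.domain, ⟪η, A φ⟫ = conj z * ⟪η, (φ : H)⟫) : η ∈ defectSet A z := by
  have hkey : ∀ φ : A.domain, ⟪z • η, (φ : H)⟫ = ⟪η, A φ⟫ := by
    intro φ; rw [inner_smul_left, h φ]
  have hmem : η ∈ A.adjoint.domain :=
    LinearPMap.mem_adjoint_domain_of_exists _ ⟨z • η, hkey⟩
  have happ : A.adjoint ⟨η, hmem⟩ = z • η :=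
    LinearPMap.adjoint_apply_eq hd ⟨η, hmem⟩ hkey
  exact A.adjoint.mem_graph_iff.mpr ⟨⟨η, hmem⟩, rfl, happ⟩

lemma defect_forall (A : H →ₗ.[ℂ] H) (hd : Dense (A.domain : Set H)) (z : ℂ) (ψ : H)
    (h : ψ ∈ defectSet A z) : ∀ φ : A.domain, ⟪ψ, A φ⟫ = conj z * ⟪ψ, (φ : H)⟫ := by
  obtain ⟨ψ', hψ'1, hψ'2⟩ := A.adjoint.mem_graph_iff.mp h
  intro φ
  have h1 := LinearPMap.adjoint_isFormalAdjoint hd ψ' φ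
  rw [hψ'2, hψ'1] at h1
  rw [← h1, inner_smul_left]

lemma range_opT_closed (A : H →ₗ.[ℂ] H) (hcl : A.IsClosed) (z : ℂ) (c : ℝ) (hc : 0 < c)
    (hb : ∀ φ : A.domain, c * ‖(φ : H)‖ ≤ ‖A φ - z • (φ : H)‖) :
    IsClosed ((LinearMap.range (opT A z) : Submodule ℂ H) : Set H) := by
  apply IsSeqClosed.isClosed
  intro y p hy hyp
  have hmemr : ∀ n, ∃ φ : A.domain, opT A z φ = y n := fun n => LinearMap.mem_range.mp (hy n)
  choose φs hφs using hmemr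
  have hbd : ∀ m n, c * ‖(φs m : H) - (φs n : H)‖ ≤ ‖y m - y n‖ := by
    intro m n
    have h1 := hb (φs m - φs n)
    rw [← opT_apply] at h1
    rw [map_sub, hφs, hφs] at h1
    rwa [AddSubgroupClass.coe_sub] at h1
  have hcy : CauchySeq y := hyp.cauchySeq
  have hcφ : CauchySeq (fun n => (φs n : H)) := by
    rw [Metric.cauchySeq_iff] at hcy ⊢
    intro ε hε
    obtain ⟨N, hN⟩ := hcy (c * ε) (by positivity)
    refine ⟨N, fun m hm n hn => ?_⟩
    have h2 := hbd m n
    have h3 := hN m hm n hn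
    rw [dist_eq_norm] at h3 ⊢
    nlinarith [norm_nonneg ((φs m : H) - (φs n : H))]
  obtain ⟨q, hq⟩ := cauchySeq_tendsto_of_complete hcφ
  have hAφ : Tendsto (fun n => A (φs n)) atTop (nhds (p + z • q)) := by
    have heq : (fun n => A (φs n)) = fun n => y n + z • (φs n : H) := by
      funext n
      have := hφs n
      rw [opT_apply] at this
      rw [← this]; abel
    rw [heq]
    exact hyp.add (hq.const_smul z)
  have hgraph : (q, p + z • q) ∈ A.graph := by
    refine hcl.mem_of_tendsto (hq.prodMk_nhds hAφ) (Eventually.of_forall fun n => ?_)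
    exact A.mem_graph (φs n)
  obtain ⟨q', hq'1, hq'2⟩ := A.mem_graph_iff.mp hgraph
  refine ⟨q', ?_⟩
  rw [opT_apply, hq'2, hq'1]
  simp

/-- Krein's theorem: for every `A ∈ Sym` there exists a gauge `μ` whose exceptional
set `S_μ` does not intersect the real line, i.e. for every real `x` there is
`ψ ∈ ker(A* - x·I)` with `⟨μ, ψ⟩ ≠ 0`. -/
theorem exists_gauge_exceptional_set_disjoint_from_reals
    [TopologicalSpace.SeparableSpace H]
    (A : H →ₗ.[ℂ] H) (hA : IsSymClass A) :
    ∃ μ : H, ∀ x : ℝ, ∃ ψ ∈ defectSet A (x : ℂ), (inner ℂ μ ψ : ℂ) ≠ 0 := by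
  obtain ⟨μ, hμdef, hμne, hμspan⟩ := hA.deficiency I (by simp)
  refine ⟨μ, fun x => ?_⟩
  obtain ⟨c, hc, hreg⟩ := hA.regular x
  -- Step A: the key vanishing lemma
  have key : ∀ ψ ∈ defectSet A (x : ℂ), ⟪μ, ψ⟫ = 0 → ψ = 0 := by
    intro ψ hψ hμψ
    set M : Submodule ℂ H := LinearMap.range (opT A (-I)) with hM
    have hMb : ∀ φ : A.domain, 1 * ‖(φ : H)‖ ≤ ‖A φ - (-I) • (φ : H)‖ := by
      intro φ
      rw [one_mul]
      have him : (⟪A φ, (φ : H)⟫).im = 0 := by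
        rw [← Complex.conj_eq_iff_im, inner_conj_symm]
        exact (hA.symmetric φ φ).symm
      have heq : A φ - (-I) • (φ : H) = A φ + I • (φ : H) := by module
      have hsq : ‖A φ + I • (φ : H)‖ ^ 2 = ‖A φ‖ ^ 2 + ‖(φ : H)‖ ^ 2 := by
        rw [@norm_add_sq ℂ, inner_smul_right, norm_smul]
        simp [Complex.mul_re, him]
      rw [heq]
      nlinarith [norm_nonneg (A φ + I • (φ : H)), norm_nonneg (A φ), norm_nonneg ((φ : H))]
    have hMcl : IsClosed (M : Set H) := range_opT_closed A hA.closed _ 1 one_pos hMb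
    have hperp : (Mᗮ : Set H) ⊆ defectSet A I := by
      intro η hη
      apply mem_defect_of_forall A hA.dense
      intro φ
      have h0 := (Submodule.mem_orthogonal M η).mp hη _ (LinearMap.mem_range_self (opT A (-I)) φ)
      have h1 : ⟪η, A φ - (-I) • (φ : H)⟫ = 0 := by
        rw [← inner_conj_symm]
        rw [opT_apply] at h0
        rw [h0, map_zero]
      rw [inner_sub_right, inner_smul_right] at h1
      rw [Complex.conj_I]
      linear_combination h1
    have hψM : ψ ∈ M := by
      have h1 : ψ ∈ Mᗮᗮ := by
        rw [Submodule.mem_orthogonal]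
        intro η hη
        obtain ⟨cc, rfl⟩ := hμspan η (hperp hη)
        rw [inner_smul_left, hμψ, mul_zero]
      rwa [Submodule.orthogonal_orthogonal_eq_closure,
        hMcl.submodule_topologicalClosure_eq] at h1
    obtain ⟨φ0, hφ0⟩ := hψM
    rw [opT_apply] at hφ0
    set u : H := A φ0 - (x : ℂ) • (φ0 : H) with hu
    have hxψ := defect_forall A hA.dense _ ψ hψ φ0
    rw [Complex.conj_ofReal] at hxψ
    have hψu : ⟪ψ, u⟫ = 0 := by
      rw [hu, inner_sub_right, inner_smul_right, hxψ]; ring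
    have hψeq : ψ = u + ((x : ℂ) + I) • (φ0 : H) := by
      rw [← hφ0, hu]; module
    set r : ℂ := ⟪(φ0 : H), u⟫ with hrdef
    have E : ⟪u, u⟫ + ((x : ℂ) - I) * r = 0 := by
      have h2 := hψu
      rw [hψeq, inner_add_left, inner_smul_left] at h2
      have h3 : conj ((x : ℂ) + I) = (x : ℂ) - I := by
        rw [map_add, Complex.conj_ofReal, Complex.conj_I, sub_eq_add_neg]
      rw [h3] at h2
      exact h2
    have him : r.im = 0 := by
      rw [← Complex.conj_eq_iff_im, hrdef, inner_conj_symm]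
      rw [hu, inner_sub_left, inner_sub_right, inner_smul_left, inner_smul_right,
        Complex.conj_ofReal, hA.symmetric φ0 φ0]
    have himu : (⟪u, u⟫).im = 0 := by
      rw [← Complex.conj_eq_iff_im]
      exact inner_self_conj u
    have hre : r.re = 0 := by
      have h4 := congrArg Complex.im E
      simp [Complex.add_im, Complex.mul_im, Complex.sub_im, Complex.sub_re, him, himu] at h4
      have h5 : ((‖u‖ : ℂ) ^ 2).im = 0 := by rw [← Complex.ofReal_pow, Complex.ofReal_im]
      linarith
    have hr0 : r = 0 := Complex.ext hre him
    have hu0 : u = 0 := by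
      rw [hr0, mul_zero, add_zero] at E
      exact inner_self_eq_zero.mp E
    have hφ00 : (φ0 : H) = 0 := by
      have h5 := hreg φ0
      rw [← hu, hu0, norm_zero] at h5
      have h6 : ‖(φ0 : H)‖ = 0 := le_antisymm (by nlinarith) (norm_nonneg _)
      exact norm_eq_zero.mp h6
    rw [hψeq, hu0, hφ00, smul_zero, add_zero]
  -- Step B: existence of a nonzero defect vector at x
  have hex : ∃ ψ ∈ defectSet A (x : ℂ), ψ ≠ 0 := by
    by_contra hno
    push_neg at hno
    set N : Submodule ℂ H := LinearMap.range (opT A (x : ℂ)) with hN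
    have hNcl : IsClosed (N : Set H) := range_opT_closed A hA.closed _ c hc hreg
    have hperpN : (Nᗮ : Set H) ⊆ defectSet A (x : ℂ) := by
      intro η hη
      apply mem_defect_of_forall A hA.dense
      intro φ
      have h0 := (Submodule.mem_orthogonal N η).mp hη _ (LinearMap.mem_range_self (opT A (x : ℂ)) φ)
      have h1 : ⟪η, A φ - (x : ℂ) • (φ : H)⟫ = 0 := by
        rw [← inner_conj_symm]
        rw [opT_apply] at h0
        rw [h0, map_zero]
      rw [inner_sub_right, inner_smul_right] at h1
      rw [Complex.conj_ofReal]
      linear_combination h1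
    have hNtop : N = ⊤ := by
      have h1 : Nᗮ = ⊥ := by
        rw [Submodule.eq_bot_iff]
        intro η hη
        exact hno η (hperpN hη)
      have h2 := Submodule.orthogonal_orthogonal_eq_closure N
      rw [h1, Submodule.bot_orthogonal_eq_top, hNcl.submodule_topologicalClosure_eq] at h2
      exact h2.symm
    have hsol : (I - (x : ℂ)) • μ ∈ N := by rw [hNtop]; trivial
    obtain ⟨φ, hφ⟩ := hsol
    rw [opT_apply] at hφ
    have hAle : A ≤ A.adjoint :=
      LinearPMap.IsFormalAdjoint.le_adjoint hA.dense (fun a b => hA.symmetric a b)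
    have g2 : ((φ : H), A φ) ∈ A.adjoint.graph :=
      LinearPMap.le_graph_of_le hAle (A.mem_graph φ)
    have g1 : (μ, I • μ) ∈ A.adjoint.graph := hμdef
    have g3 : (μ - (φ : H), I • μ - A φ) ∈ A.adjoint.graph := by
      have := A.adjoint.graph.sub_mem g1 g2
      simpa [Prod.sub_def] using this
    have hAφeq : A φ = (I - (x : ℂ)) • μ + (x : ℂ) • (φ : H) := by
      rw [← hφ]; abel
    have heq2 : I • μ - A φ = (x : ℂ) • (μ - (φ : H)) := by
      rw [hAφeq]; module
    rw [heq2] at g3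
    have hη0 : μ - (φ : H) = 0 := hno _ g3
    have hμφ : μ = (φ : H) := by rwa [sub_eq_zero] at hη0
    have hAφI : A φ = I • (φ : H) := by
      rw [hAφeq, ← hμφ]
      rw [hμφ]; module
    have hs := hA.symmetric φ φ
    rw [hAφI, inner_smul_left, inner_smul_right, Complex.conj_I] at hs
    have hinner0 : ⟪(φ : H), (φ : H)⟫ = 0 := by
      have h7 : (2 * I) * ⟪(φ : H), (φ : H)⟫ = 0 := by linear_combination -hs
      have h8 : (2 * I : ℂ) ≠ 0 := by simp [Complex.I_ne_zero]
      exact (mul_eq_zero.mp h7).resolve_left h8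
    have hφ0 : (φ : H) = 0 := inner_self_eq_zero.mp hinner0
    exact hμne (by rw [hμφ, hφ0])
  obtain ⟨ψ, hψdef, hψne⟩ := hex
  exact ⟨ψ, hψdef, fun h0 => hψne (key ψ hψdef h0)⟩

end
end

section
/- Let e be a Hermite-Biehler function having no real zeros and let γ ∈ (0, π). Define ĕ(z) := −s_γ(z) − i·s₀(z). Then ĕ is also a Hermite-Biehler function and has no real zeros; moreover, denoting by s̆_β the functions built from ĕ in place of e, one has s̆₀(z) = s₀(z) and s̆_{π/2}(z) = s_γ(z) for all z ∈ ℂ. -/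
open Complex ComplexConjugate Real

noncomputable section

/-- `e#(z) := conj (e (conj z))`. -/
def esharp (e : ℂ → ℂ) (z : ℂ) : ℂ := conj (e (conj z))

/-- An entire function `e` is of Hermite-Biehler class if it has no zeros in the open
upper half-plane and `|e(z)| > |e#(z)|` there. -/
def HermiteBiehler (e : ℂ → ℂ) : Prop :=
  Differentiable ℂ e ∧ (∀ z : ℂ, 0 < z.im → e z ≠ 0) ∧
    ∀ z : ℂ, 0 < z.im → ‖esharp e z‖ < ‖e z‖

/-- `s_β(z) := (i/2) (e^{iβ} e(z) - e^{-iβ} e#(z))`. -/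
def sfun (e : ℂ → ℂ) (β : ℝ) (z : ℂ) : ℂ :=
  (Complex.I / 2) * (Complex.exp (Complex.I * β) * e z
    - Complex.exp (-(Complex.I * β)) * esharp e z)

lemma esharp_differentiable (e : ℂ → ℂ) (he : Differentiable ℂ e) :
    Differentiable ℂ (esharp e) := by
  intro z
  have h0 := (he (conj z)).hasFDerivAt
  have hconj : HasFDerivAt (fun w : ℂ => conj w)
      Complex.conjCLE.toContinuousLinearMap z :=
    Complex.conjCLE.toContinuousLinearMap.hasFDerivAt
  have h1 := ((h0.restrictScalars ℝ).comp z hconj)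
  have h2 := (Complex.conjCLE.toContinuousLinearMap.hasFDerivAt
      (x := e (conj z))).comp z h1
  have h3 : HasFDerivAt (esharp e)
      ((ContinuousLinearMap.smulRight (1 : ℂ →L[ℂ] ℂ)
        (conj (fderiv ℂ e (conj z) 1)))) z := by
    apply hasFDerivAt_of_restrictScalars ℝ h2
    ext h
    simp [Complex.conjCLE_apply, mul_comm]
  exact h3.differentiableAt

lemma exp_I_mul (γ : ℝ) :
    Complex.exp (Complex.I * γ) = (Real.cos γ : ℂ) + (Real.sin γ : ℂ) * Complex.I := by
  rw [mul_comm, Complex.exp_mul_I, ← Complex.ofReal_cos, ← Complex.ofReal_sin]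

lemma exp_neg_I_mul (γ : ℝ) :
    Complex.exp (-(Complex.I * γ)) = (Real.cos γ : ℂ) - (Real.sin γ : ℂ) * Complex.I := by
  have h : -(Complex.I * (γ:ℂ)) = ((-γ : ℝ) : ℂ) * Complex.I := by push_cast; ring
  rw [h, Complex.exp_mul_I, Complex.ofReal_neg, Complex.cos_neg, Complex.sin_neg,
    ← Complex.ofReal_cos, ← Complex.ofReal_sin]
  ring

lemma sfun_zero (g : ℂ → ℂ) (z : ℂ) :
    sfun g 0 z = (Complex.I/2) * (g z - esharp g z) := by
  simp [sfun]

lemma sfun_pi_div_two (g : ℂ → ℂ) (z : ℂ) :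
    sfun g (π/2) z = (Complex.I/2) * (Complex.I * g z + Complex.I * esharp g z) := by
  rw [sfun, exp_I_mul, exp_neg_I_mul, Real.cos_pi_div_two, Real.sin_pi_div_two]
  push_cast
  ring

/-- Lemma 3.4: if `e` is Hermite-Biehler without real zeros and `γ ∈ (0,π)`, then
`ĕ := -s_γ - i s₀` is Hermite-Biehler without real zeros, and `s̆₀ = s₀`,
`s̆_{π/2} = s_γ`. -/
theorem hermiteBiehler_breve
    (e : ℂ → ℂ) (he : HermiteBiehler e) (heReal : ∀ x : ℝ, e x ≠ 0)
    (γ : ℝ) (hγ : γ ∈ Set.Ioo 0 π) :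
    HermiteBiehler (fun z => -sfun e γ z - Complex.I * sfun e 0 z) ∧
    (∀ x : ℝ, -sfun e γ x - Complex.I * sfun e 0 x ≠ 0) ∧
    (∀ z : ℂ, sfun (fun w => -sfun e γ w - Complex.I * sfun e 0 w) 0 z = sfun e 0 z) ∧
    (∀ z : ℂ, sfun (fun w => -sfun e γ w - Complex.I * sfun e 0 w) (π / 2) z = sfun e γ z) := by
  obtain ⟨hdiff, hzero, habs⟩ := he
  have hsin : 0 < Real.sin γ := Real.sin_pos_of_pos_of_lt_pi hγ.1 hγ.2
  set A : ℂ := (((1 + Real.sin γ)/2 : ℝ) : ℂ) + ((-(Real.cos γ/2) : ℝ) : ℂ) * Complex.I with hA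
  set B : ℂ := (((1 - Real.sin γ)/2 : ℝ) : ℂ) + ((-(Real.cos γ/2) : ℝ) : ℂ) * Complex.I with hB
  have hf : ∀ z : ℂ, -sfun e γ z - Complex.I * sfun e 0 z = A * e z - B * esharp e z := by
    intro z
    simp only [sfun, exp_I_mul, exp_neg_I_mul, Complex.ofReal_zero, mul_zero, neg_zero,
      Complex.exp_zero, hA, hB]
    linear_combination (norm := (push_cast; ring1))
      (-(Real.sin γ + 1)/2 * e z + (1 - Real.sin γ)/2 * esharp e z : ℂ) * Complex.I_sq
  have hcA : conj A = (((1 + Real.sin γ)/2 : ℝ) : ℂ) + ((Real.cos γ/2 : ℝ) : ℂ) * Complex.I := by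
    rw [hA, map_add, map_mul, Complex.conj_ofReal, Complex.conj_ofReal, Complex.conj_I]
    push_cast
    ring
  have hcB : conj B = (((1 - Real.sin γ)/2 : ℝ) : ℂ) + ((Real.cos γ/2 : ℝ) : ℂ) * Complex.I := by
    rw [hB, map_add, map_mul, Complex.conj_ofReal, Complex.conj_ofReal, Complex.conj_I]
    push_cast
    ring
  have hesh : ∀ z : ℂ, esharp (fun w => -sfun e γ w - Complex.I * sfun e 0 w) z
      = conj A * esharp e z - conj B * e z := by
    intro z
    show conj (-sfun e γ (conj z) - Complex.I * sfun e 0 (conj z)) = _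
    rw [hf (conj z)]
    simp only [map_sub, map_mul, esharp, Complex.conj_conj]
  have hkey : ∀ z : ℂ, Complex.normSq (-sfun e γ z - Complex.I * sfun e 0 z)
      - Complex.normSq (esharp (fun w => -sfun e γ w - Complex.I * sfun e 0 w) z)
      = Real.sin γ * (Complex.normSq (e z) - Complex.normSq (esharp e z)) := by
    intro z
    have hC : ((Complex.normSq (-sfun e γ z - Complex.I * sfun e 0 z) : ℝ) : ℂ)
        - ((Complex.normSq (esharp (fun w => -sfun e γ w - Complex.I * sfun e 0 w) z) : ℝ) : ℂ)
        = ((Real.sin γ : ℝ) : ℂ)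
          * (((Complex.normSq (e z) : ℝ) : ℂ) - ((Complex.normSq (esharp e z) : ℝ) : ℂ)) := by
      rw [← Complex.mul_conj, ← Complex.mul_conj, ← Complex.mul_conj, ← Complex.mul_conj]
      rw [hf z, hesh z]
      simp only [hA, hB, map_sub, map_add, map_mul, map_neg, Complex.conj_conj,
        Complex.conj_ofReal, Complex.conj_I]
      push_cast
      ring
    exact_mod_cast hC
  have hnormAB : Complex.normSq A - Complex.normSq B = Real.sin γ := by
    rw [hA, hB, Complex.normSq_add_mul_I, Complex.normSq_add_mul_I]
    ring
  have hltUp : ∀ z : ℂ, 0 < z.im →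
      Complex.normSq (esharp e z) < Complex.normSq (e z) := by
    intro z hz
    have h := habs z hz
    have h2 := pow_lt_pow_left₀ h (norm_nonneg _) two_ne_zero
    rwa [Complex.sq_norm, Complex.sq_norm] at h2
  refine ⟨⟨?_, ?_, ?_⟩, ?_, ?_, ?_⟩
  · -- differentiable
    have hds := esharp_differentiable e hdiff
    unfold sfun
    fun_prop
  · -- no zeros in UHP
    intro z hz h0
    have h0' : -sfun e γ z - Complex.I * sfun e 0 z = 0 := h0
    have h3 := hkey z
    rw [h0', Complex.normSq_zero] at h3
    have h4 := mul_pos hsin (sub_pos.2 (hltUp z hz))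
    have h5 := Complex.normSq_nonneg
      (esharp (fun w => -sfun e γ w - Complex.I * sfun e 0 w) z)
    linarith
  · -- modulus inequality in UHP
    intro z hz
    show ‖esharp (fun w => -sfun e γ w - Complex.I * sfun e 0 w) z‖
      < ‖-sfun e γ z - Complex.I * sfun e 0 z‖
    have h3 := hkey z
    have h4 := mul_pos hsin (sub_pos.2 (hltUp z hz))
    have h5 : ‖esharp (fun w => -sfun e γ w - Complex.I * sfun e 0 w) z‖ ^ 2
        < ‖-sfun e γ z - Complex.I * sfun e 0 z‖ ^ 2 := by
      rw [Complex.sq_norm, Complex.sq_norm]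
      linarith
    exact lt_of_pow_lt_pow_left₀ 2 (norm_nonneg _) h5
  · -- no real zeros
    intro x h0
    rw [hf x] at h0
    have heshx : esharp e (x:ℂ) = conj (e x) := by simp [esharp, Complex.conj_ofReal]
    rw [heshx] at h0
    have h1 : A * e x = B * conj (e x) := sub_eq_zero.1 h0
    have h2 := congrArg Complex.normSq h1
    rw [Complex.normSq_mul, Complex.normSq_mul, Complex.normSq_conj] at h2
    have hne : Complex.normSq (e x) ≠ 0 := by
      simpa [Complex.normSq_eq_zero] using heReal x
    have h3 : Complex.normSq A = Complex.normSq B := mul_right_cancel₀ hne h2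
    rw [h3] at hnormAB
    linarith
  · -- s̆₀ = s₀
    intro z
    rw [sfun_zero, hf z, hesh z, hcA, hcB, hA, hB, sfun_zero e z]
    push_cast
    ring
  · -- s̆_{π/2} = s_γ
    intro z
    rw [sfun_pi_div_two, hf z, hesh z, hcA, hcB, sfun, exp_I_mul, exp_neg_I_mul, hA, hB]
    linear_combination (norm := (push_cast; ring1))
      (-(Real.cos γ/2) * Complex.I * e z + (Real.cos γ/2) * Complex.I * esharp e z : ℂ)
        * Complex.I_sq

end
end

section
/- Let e be a Hermite-Biehler function having no real zeros, let γ ∈ (0, π), and set ĕ(z) := −s_γ(z) − i·s₀(z). Then there exist positive constants r₁ and r₂ such that r₂·|e(z)| ≤ |ĕ(z)| ≤ r₁·|e(z)| for every z ∈ ℂ with Im z ≥ 0. -/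
open Complex ComplexConjugate Real

noncomputable section

lemma breve_eq (e : ℂ → ℂ) (γ : ℝ) (z : ℂ) :
    -sfun e γ z - Complex.I * sfun e 0 z =
    ((1 - Complex.I * Complex.exp (Complex.I * γ))/2) * e z +
    ((Complex.I * Complex.exp (-(Complex.I * γ)) - 1)/2) * esharp e z := by
  simp only [sfun, Complex.ofReal_zero, mul_zero, Complex.exp_zero, neg_zero]
  ring_nf
  simp [Complex.I_sq]
  ring

lemma absA_sq (γ : ℝ) :
    (‖(1 - Complex.I * Complex.exp (Complex.I * γ))/2‖)^2
      = (1 + Real.sin γ)/2 := by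
  rw [Complex.sq_norm, mul_comm Complex.I (γ:ℂ), Complex.exp_mul_I]
  simp [Complex.normSq_apply, Complex.div_re, Complex.div_im, Complex.normSq,
    Complex.sin_ofReal_re, Complex.cos_ofReal_re, Complex.sin_ofReal_im,
    Complex.cos_ofReal_im]
  nlinarith [Real.sin_sq_add_cos_sq γ]

lemma absB_sq (γ : ℝ) :
    (‖(Complex.I * Complex.exp (-(Complex.I * γ)) - 1)/2‖)^2
      = (1 - Real.sin γ)/2 := by
  rw [Complex.sq_norm, mul_comm Complex.I (γ:ℂ)]
  rw [show -((γ:ℂ)*Complex.I) = (-γ:ℝ)*Complex.I by push_cast; ring, Complex.exp_mul_I]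
  simp [Complex.normSq_apply, Complex.div_re, Complex.div_im, Complex.normSq,
    Complex.sin_ofReal_re, Complex.cos_ofReal_re, Complex.sin_ofReal_im,
    Complex.cos_ofReal_im]
  nlinarith [Real.sin_sq_add_cos_sq γ]

/-- Lemma 3.5 (key estimate): `|ĕ|` and `|e|` are two-sidedly comparable on the closed
upper half-plane, where `ĕ := -s_γ - i s₀`. -/
theorem breve_two_sided_estimate
    (e : ℂ → ℂ) (he : HermiteBiehler e) (heReal : ∀ x : ℝ, e x ≠ 0)
    (γ : ℝ) (hγ : γ ∈ Set.Ioo 0 π) :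
    ∃ r₁ > (0 : ℝ), ∃ r₂ > (0 : ℝ), ∀ z : ℂ, 0 ≤ z.im →
      r₂ * ‖e z‖ ≤ ‖-sfun e γ z - Complex.I * sfun e 0 z‖ ∧
      ‖-sfun e γ z - Complex.I * sfun e 0 z‖ ≤ r₁ * ‖e z‖ := by
  set a : ℂ := (1 - Complex.I * Complex.exp (Complex.I * γ))/2 with ha
  set b : ℂ := (Complex.I * Complex.exp (-(Complex.I * γ)) - 1)/2 with hb
  set A : ℝ := ‖a‖
  set B : ℝ := ‖b‖
  have hsin : 0 < Real.sin γ := Real.sin_pos_of_pos_of_lt_pi hγ.1 hγ.2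
  have hsq : B^2 < A^2 := by
    rw [absA_sq γ, absB_sq γ]; linarith
  have hA0 : 0 ≤ A := norm_nonneg _
  have hB0 : 0 ≤ B := norm_nonneg _
  have hBA : B < A := by nlinarith
  refine ⟨A + B, by linarith, A - B, by linarith, fun z hz => ?_⟩
  have hle : ‖esharp e z‖ ≤ ‖e z‖ := by
    rcases lt_or_eq_of_le hz with h | h
    · exact le_of_lt (he.2.2 z h)
    · have hconj : conj z = z := Complex.conj_eq_iff_im.mpr h.symm
      simp [esharp, hconj]
  rw [breve_eq e γ z]
  constructor
  · calc (A - B) * ‖e z‖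
        = A * ‖e z‖ - B * ‖e z‖ := by ring
      _ ≤ ‖a * e z‖ - ‖b * esharp e z‖ := by
          rw [norm_mul, norm_mul]
          have := mul_le_mul_of_nonneg_left hle hB0
          linarith
      _ ≤ ‖a * e z + b * esharp e z‖ := by
          have h1 : ‖a * e z‖
              ≤ ‖a * e z + b * esharp e z‖ + ‖b * esharp e z‖ := by
            calc ‖a * e z‖
                = ‖(a * e z + b * esharp e z) - b * esharp e z‖ := by ring_nf
              _ ≤ _ := norm_sub_le (a * e z + b * esharp e z) (b * esharp e z)
          linarith
  · calc ‖a * e z + b * esharp e z‖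
        ≤ ‖a * e z‖ + ‖b * esharp e z‖ :=
          norm_add_le _ _
      _ ≤ A * ‖e z‖ + B * ‖e z‖ := by
          rw [norm_mul, norm_mul]
          have := mul_le_mul_of_nonneg_left hle hB0
          linarith
      _ = (A + B) * ‖e z‖ := by ring
end
end

section
/- Let e : ℂ → ℂ be entire and let γ ∈ (0, π). Set ĕ(z) := −s_γ(z) − i·s₀(z). Then for every z ∈ ℂ, ĕ(z) = ((1 − e^{i(γ+π/2)})/2)·e(z) − ((1 − e^{−i(γ−π/2)})/2)·e#(z). Moreover the constants satisfy |(1 − e^{i(γ+π/2)})/2| > √2/2 and |1 − e^{−i(γ−π/2)}| < |1 − e^{i(γ+π/2)}|. -/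
open Complex ComplexConjugate Real

noncomputable section

lemma abs_one_sub_exp (θ : ℝ) :
    ‖1 - Complex.exp (Complex.I * θ)‖^2 = 2 - 2 * Real.cos θ := by
  rw [mul_comm, Complex.exp_mul_I, Complex.sq_norm]
  simp [Complex.normSq_apply, Complex.sub_re, Complex.sub_im, Complex.add_re, Complex.add_im,
    Complex.cos_ofReal_re, Complex.sin_ofReal_re]
  nlinarith [Real.sin_sq_add_cos_sq θ]

/-- The algebraic identity behind Lemma 3.5: `ĕ = c₁·e - c₂·e#` with
`c₁ = (1 - e^{i(γ+π/2)})/2`, `c₂ = (1 - e^{-i(γ-π/2)})/2`, where `|c₁| > √2/2` and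
`|1 - e^{-i(γ-π/2)}| < |1 - e^{i(γ+π/2)}|` for `γ ∈ (0,π)`. -/
theorem breve_identity_and_constants
    (e : ℂ → ℂ) (he : Differentiable ℂ e)
    (γ : ℝ) (hγ : γ ∈ Set.Ioo 0 π) :
    (∀ z : ℂ, -sfun e γ z - Complex.I * sfun e 0 z =
      ((1 - Complex.exp (Complex.I * (γ + π / 2))) / 2) * e z
        - ((1 - Complex.exp (-(Complex.I * (γ - π / 2)))) / 2) * esharp e z) ∧
    Real.sqrt 2 / 2 < ‖(1 - Complex.exp (Complex.I * (γ + π / 2))) / 2‖ ∧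
    ‖1 - Complex.exp (-(Complex.I * (γ - π / 2)))‖ <
      ‖1 - Complex.exp (Complex.I * (γ + π / 2))‖ := by
  obtain ⟨hγ0, hγπ⟩ := hγ
  have hs : 0 < Real.sin γ := Real.sin_pos_of_pos_of_lt_pi hγ0 hγπ
  have hIpi : Complex.exp ((π:ℂ) / 2 * Complex.I) = Complex.I := by
    rw [Complex.exp_mul_I, Complex.cos_pi_div_two, Complex.sin_pi_div_two]; ring
  have h1 : Complex.exp (Complex.I * (γ + π / 2)) = Complex.I * Complex.exp (Complex.I * γ) := by
    rw [mul_add, Complex.exp_add, mul_comm (Complex.I) ((π:ℂ)/2), hIpi]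
    ring
  have h2 : Complex.exp (-(Complex.I * (γ - π / 2))) = Complex.I * Complex.exp (-(Complex.I * γ)) := by
    have : -(Complex.I * ((γ:ℂ) - (π:ℂ) / 2)) = (π:ℂ)/2 * Complex.I + -(Complex.I * γ) := by ring
    rw [this, Complex.exp_add, hIpi]
  have habs1 : ‖1 - Complex.exp (Complex.I * (γ + π / 2))‖^2
      = 2 + 2 * Real.sin γ := by
    have := abs_one_sub_exp (γ + π / 2)
    rw [Real.cos_add_pi_div_two] at this
    push_cast at this ⊢
    linarith
  have habs2 : ‖1 - Complex.exp (-(Complex.I * (γ - π / 2)))‖^2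
      = 2 - 2 * Real.sin γ := by
    have he2 : -(Complex.I * ((γ:ℂ) - (π:ℂ) / 2)) = Complex.I * ((π / 2 - γ : ℝ) : ℂ) := by
      push_cast; ring
    have := abs_one_sub_exp (π / 2 - γ)
    rw [Real.cos_pi_div_two_sub] at this
    rw [show (Complex.exp (-(Complex.I * (γ - π / 2))) = Complex.exp (Complex.I * ((π / 2 - γ : ℝ) : ℂ))) from by rw [← he2]]
    linarith
  refine ⟨fun z => ?_, ?_, ?_⟩
  · simp only [sfun, esharp, h1, h2, Complex.ofReal_zero, mul_zero, neg_zero, Complex.exp_zero]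
    linear_combination (-(e z - (starRingEnd ℂ) (e ((starRingEnd ℂ) z)))/2) * Complex.I_sq
  · rw [norm_div, Complex.norm_two]
    rw [div_lt_div_iff_of_pos_right (by norm_num : (0:ℝ) < 2)] at *
    refine lt_of_pow_lt_pow_left₀ 2 (norm_nonneg _) ?_
    rw [Real.sq_sqrt (by norm_num : (2:ℝ) ≥ 0), habs1]
    linarith
  · refine lt_of_pow_lt_pow_left₀ 2 (norm_nonneg _) ?_
    rw [habs1, habs2]
    linarith

end
end

section
/- Let e be a Hermite-Biehler function. For z, w ∈ ℂ with z ≠ w̄ define the reproducing kernel k(z, w) := (e#(z)·e(w̄) − e(z)·e#(w̄)) / (2πi·(z − w̄)). Then for every z in the open upper half-plane ℂ⁺ one has k(z, z) = (|e(z)|² − |e#(z)|²) / (4π·Im z) > 0, and for all z, w ∈ ℂ⁺ one has k(z, w) ≠ 0. -/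
open Complex ComplexConjugate Real

noncomputable section

/-- The reproducing kernel of the de Branges space `B(e)`. -/
def dBKernel (e : ℂ → ℂ) (z w : ℂ) : ℂ :=
  (esharp e z * e (conj w) - e z * esharp e (conj w)) / (2 * π * Complex.I * (z - conj w))

/-- For a Hermite-Biehler function `e`: on the open upper half-plane the diagonal of the
reproducing kernel equals `(|e(z)|² - |e#(z)|²)/(4π·Im z) > 0`, and the kernel has no
zeros for `z, w` in the open upper half-plane. -/
theorem dBKernel_diag_pos_and_nonvanishing
    (e : ℂ → ℂ) (he : HermiteBiehler e) :
    (∀ z : ℂ, 0 < z.im →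
      dBKernel e z z =
        (((‖e z‖) ^ 2 - (‖esharp e z‖) ^ 2) / (4 * π * z.im) : ℝ) ∧
      0 < ((‖e z‖) ^ 2 - (‖esharp e z‖) ^ 2) / (4 * π * z.im)) ∧
    ∀ z w : ℂ, 0 < z.im → 0 < w.im → dBKernel e z w ≠ 0 := by
  obtain ⟨hd, hz0, hlt⟩ := he
  constructor
  · intro z hzi
    have h1 : esharp e (conj z) = conj (e z) := by simp [esharp]
    have h2 : e (conj z) = conj (esharp e z) := by simp [esharp]
    have hsq : ‖esharp e z‖ ^ 2 < ‖e z‖ ^ 2 :=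
      pow_lt_pow_left₀ (hlt z hzi) (norm_nonneg _) two_ne_zero
    have hpos : 0 < (‖e z‖) ^ 2 - (‖esharp e z‖) ^ 2 :=
      sub_pos.mpr hsq
    have hden : 0 < 4 * π * z.im := by positivity
    refine ⟨?_, div_pos hpos hden⟩
    rw [dBKernel, h1, h2, Complex.mul_conj, Complex.mul_conj, Complex.sub_conj]
    have him : (z.im : ℂ) ≠ 0 := by exact_mod_cast ne_of_gt hzi
    have hpi : (π : ℂ) ≠ 0 := by exact_mod_cast Real.pi_ne_zero
    field_simp
    rw [← Complex.sq_norm, ← Complex.sq_norm]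
    push_cast
    ring_nf
    simp [Complex.I_sq]
    ring_nf
    field_simp
  · intro z w hzi hwi
    have hab : ‖esharp e z * e (conj w)‖
        < ‖e z * esharp e (conj w)‖ := by
      have h1 : esharp e (conj w) = conj (e w) := by simp [esharp]
      have h2 : e (conj w) = conj (esharp e w) := by simp [esharp]
      rw [norm_mul, norm_mul, h1, h2, Complex.norm_conj, Complex.norm_conj]
      exact mul_lt_mul'' (hlt z hzi) (hlt w hwi) (norm_nonneg _)
        (norm_nonneg _)
    have hnum : esharp e z * e (conj w) - e z * esharp e (conj w) ≠ 0 := by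
      intro h
      rw [sub_eq_zero] at h
      rw [h] at hab
      exact lt_irrefl _ hab
    have hzw : z - conj w ≠ 0 := by
      intro h
      have : (z - conj w).im = 0 := by rw [h]; simp
      simp [Complex.sub_im, Complex.conj_im] at this
      nlinarith
    have hden : (2 * (π : ℂ) * Complex.I * (z - conj w)) ≠ 0 := by
      have hpi : (π : ℂ) ≠ 0 := by exact_mod_cast Real.pi_ne_zero
      simp [Complex.I_ne_zero, hpi, hzw]
    exact div_ne_zero hnum hden

end
end

section
/- Let w ∈ ℂ∖ℝ and u ∈ dom(A); set φ := Au − wu and η := Au − w̄u. Then ‖η‖ = ‖φ‖ and, for every z ∈ ℂ with z ≠ w, η̂(z) = ((z − w̄)/(z − w))·φ̂(z). (In particular φ̂(w) = 0, so η̂ is the entire function obtained from φ̂ by moving the zero w to w̄.) -/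
open Complex ComplexConjugate

noncomputable section

variable {H : Type*} [NormedAddCommGroup H] [InnerProductSpace ℂ H] [CompleteSpace H]

/-- Step 2 of Proposition 4.2 (axiom (A2)): for `w` nonreal and `u ∈ dom A`, with
`φ := Au - w·u` and `η := Au - w̄·u`, one has `‖η‖ = ‖φ‖` and
`η̂(z) = ((z - w̄)/(z - w))·φ̂(z)` for `z ≠ w`, where `φ̂(z) = ⟨ξ(z̄), φ⟩`. -/
theorem hat_of_cayley_transform
    [TopologicalSpace.SeparableSpace H]
    (A : H →ₗ.[ℂ] H) (hA : IsSymClass A)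
    (ξ : ℂ → H) (hξdiff : Differentiable ℂ ξ)
    (hdom : ∀ z : ℂ, ξ z ∈ A.adjoint.domain)
    (heig : ∀ z : ℂ, A.adjoint ⟨ξ z, hdom z⟩ = z • ξ z)
    (hξne : ∀ z : ℂ, ξ z ≠ 0)
    (w : ℂ) (hw : w.im ≠ 0) (u : A.domain) :
    ‖A u - (conj w) • (u : H)‖ = ‖A u - w • (u : H)‖ ∧
    ∀ z : ℂ, z ≠ w →
      (inner ℂ (ξ (conj z)) (A u - (conj w) • (u : H)) : ℂ) =
        ((z - conj w) / (z - w)) * (inner ℂ (ξ (conj z)) (A u - w • (u : H)) : ℂ) := by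
  have hdense : Dense (A.domain : Set H) := hA.dense
  have hform := A.adjoint_isFormalAdjoint hdense
  have key : ∀ z : ℂ, (inner ℂ (ξ (conj z)) ((A u : H)) : ℂ) = z * inner ℂ (ξ (conj z)) (u : H) := by
    intro z
    have h1 := hform ⟨ξ (conj z), hdom (conj z)⟩ u
    rw [heig (conj z)] at h1
    rw [← h1, inner_smul_left]
    simp
  have aux : ∀ z c : ℂ, (inner ℂ (ξ (conj z)) (A u - c • (u : H)) : ℂ)
      = (z - c) * inner ℂ (ξ (conj z)) (u : H) := by
    intro z c
    rw [inner_sub_right, inner_smul_right, key, sub_mul]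
  constructor
  · set a : H := A u with ha
    set b : H := (u : H) with hb
    have hc : (starRingEnd ℂ) (inner ℂ a b : ℂ) = inner ℂ a b := by
      rw [inner_conj_symm]
      exact (hA.symmetric u u).symm
    have hsq : ‖a - conj w • b‖ ^ 2 = ‖a - w • b‖ ^ 2 := by
      rw [@norm_sub_sq ℂ, @norm_sub_sq ℂ, inner_smul_right, inner_smul_right,
        norm_smul, norm_smul]
      have him : (inner ℂ a b : ℂ).im = 0 := by
        have h3 := congrArg Complex.im hc
        simp only [Complex.conj_im] at h3
        linarith
      have h1 : RCLike.re ((starRingEnd ℂ) w * (inner ℂ a b : ℂ))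
          = RCLike.re (w * (inner ℂ a b : ℂ)) := by
        simp [RCLike.re_to_complex, Complex.mul_re, him]
      rw [h1, RCLike.norm_conj]
    have := congrArg Real.sqrt hsq
    simpa [Real.sqrt_sq (norm_nonneg _)] using this
  · intro z hz
    have hzw : z - w ≠ 0 := sub_ne_zero.mpr hz
    rw [aux z (conj w), aux z w]
    field_simp

end
end

section
/- (i) For every φ ∈ dom(A) and every z ∈ ℂ one has ⟨ξ(z̄), Aφ⟩ = z·⟨ξ(z̄), φ⟩, i.e. (Aφ)^(z) = z·φ̂(z). (ii) Conversely, if φ, χ ∈ H satisfy ⟨ξ(z̄), χ⟩ = z·⟨ξ(z̄), φ⟩ for every z ∈ ℂ, then φ ∈ dom(A) and Aφ = χ. Hence, under the injection Φ : φ ↦ φ̂, the operator A corresponds exactly to the operator of multiplication by the independent variable on Ĥ, with domain Φ(dom A). -/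
open Complex ComplexConjugate

noncomputable section

variable {H : Type*} [NormedAddCommGroup H] [InnerProductSpace ℂ H] [CompleteSpace H]

/-- Part (i): `(Aφ)^(z) = z·φ̂(z)` for `φ ∈ dom A`. -/
lemma hat_part_one (A : H →ₗ.[ℂ] H) (hT : Dense (A.domain : Set H))
    (ξ : ℂ → H) (hdom : ∀ z : ℂ, ξ z ∈ A.adjoint.domain)
    (heig : ∀ z : ℂ, A.adjoint ⟨ξ z, hdom z⟩ = z • ξ z) :
    ∀ φ : A.domain, ∀ z : ℂ,
      (inner ℂ (ξ (conj z)) (A φ) : ℂ) = z * (inner ℂ (ξ (conj z)) (φ : H) : ℂ) := by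
  intro φ z
  have h := (LinearPMap.adjoint_isFormalAdjoint hT) ⟨ξ (conj z), hdom (conj z)⟩ φ
  rw [heig (conj z)] at h
  rw [← h, inner_smul_left, Complex.conj_conj]

/-- In a one-dimensional defect space, every vector is a multiple of a given nonzero one. -/
lemma scalar_of_defect {A : H →ₗ.[ℂ] H} {z : ℂ}
    (hdef : ∃ ψ₀ ∈ defectSet A z, ψ₀ ≠ 0 ∧ ∀ ψ ∈ defectSet A z, ∃ c : ℂ, ψ = c • ψ₀)
    {ξz ψ : H} (hξz : ξz ∈ defectSet A z) (hξne : ξz ≠ 0) (hψ : ψ ∈ defectSet A z) :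
    ∃ c : ℂ, ψ = c • ξz := by
  obtain ⟨ψ₀, h₀, hne, hsp⟩ := hdef
  obtain ⟨c, hc⟩ := hsp ψ hψ
  obtain ⟨c₀, hc₀⟩ := hsp ξz hξz
  have hc₀ne : c₀ ≠ 0 := by
    rintro rfl
    rw [zero_smul] at hc₀
    exact hξne hc₀
  refine ⟨c / c₀, ?_⟩
  rw [hc, hc₀, smul_smul, div_mul_cancel₀ _ hc₀ne]

/-- `ξ z` belongs to the defect space at `z`. -/
lemma xi_mem_defect (A : H →ₗ.[ℂ] H) (ξ : ℂ → H) (hdom : ∀ z : ℂ, ξ z ∈ A.adjoint.domain)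
    (heig : ∀ z : ℂ, A.adjoint ⟨ξ z, hdom z⟩ = z • ξ z) (z : ℂ) :
    ξ z ∈ defectSet A z := by
  show (ξ z, z • ξ z) ∈ A.adjoint.graph
  rw [LinearPMap.mem_graph_iff]
  exact ⟨⟨ξ z, hdom z⟩, rfl, heig z⟩

/-- A vector orthogonal to all `ξ u` is zero, by simplicity. -/
lemma orth_xi_eq_zero (A : H →ₗ.[ℂ] H) (hA : IsSymClass A)
    (ξ : ℂ → H) (hdom : ∀ z : ℂ, ξ z ∈ A.adjoint.domain)
    (heig : ∀ z : ℂ, A.adjoint ⟨ξ z, hdom z⟩ = z • ξ z)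
    (hξne : ∀ z : ℂ, ξ z ≠ 0)
    (v : H) (hv : ∀ u : ℂ, (inner ℂ (ξ u) v : ℂ) = 0) : v = 0 := by
  have hbot : (Submodule.span ℂ (⋃ z ∈ {z : ℂ | z.im ≠ 0}, defectSet A z))ᗮ = ⊥ :=
    Submodule.topologicalClosure_eq_top_iff.mp hA.simple
  have hvmem : v ∈ (Submodule.span ℂ (⋃ z ∈ {z : ℂ | z.im ≠ 0}, defectSet A z))ᗮ := by
    rw [Submodule.mem_orthogonal]
    intro u hu
    induction hu using Submodule.span_induction with
    | mem u hu =>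
      rw [Set.mem_iUnion₂] at hu
      obtain ⟨z, hz, hu⟩ := hu
      obtain ⟨c, hc⟩ := scalar_of_defect (hA.deficiency z hz)
        (xi_mem_defect A ξ hdom heig z) (hξne z) hu
      rw [hc, inner_smul_left, hv z, mul_zero]
    | zero => exact inner_zero_left v
    | add x y hx hy ihx ihy => rw [inner_add_left, ihx, ihy, add_zero]
    | smul a x hx ihx => rw [inner_smul_left, ihx, mul_zero]
  rw [hbot] at hvmem
  simpa using hvmem

/-- The range of `A - i` is closed. -/
lemma range_sub_i_closed (A : H →ₗ.[ℂ] H) (hclosed : A.IsClosed)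
    (L : A.domain →ₗ[ℂ] H)
    (hLapp : ∀ θ : A.domain, L θ = A θ - Complex.I • (θ : H))
    (hlow : ∀ θ : A.domain, ‖(θ : H)‖ ≤ ‖L θ‖) :
    IsClosed ((LinearMap.range L : Submodule ℂ H) : Set H) := by
  rw [← isSeqClosed_iff_isClosed]
  intro y p hy hyp
  choose θ hθ using fun n => (LinearMap.mem_range.mp (hy n))
  have hycauchy : CauchySeq y := hyp.cauchySeq
  have hccauchy : CauchySeq (fun n => ((θ n : H))) := by
    rw [Metric.cauchySeq_iff] at hycauchy ⊢
    intro ε hε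
    obtain ⟨N, hN⟩ := hycauchy ε hε
    refine ⟨N, fun m hm n hn => lt_of_le_of_lt ?_ (hN m hm n hn)⟩
    have := hlow (θ m - θ n)
    rw [map_sub, hθ m, hθ n] at this
    simpa [dist_eq_norm] using this
  obtain ⟨x, hx⟩ := cauchySeq_tendsto_of_complete hccauchy
  have hAx : Filter.Tendsto (fun n => A (θ n)) Filter.atTop (nhds (p + Complex.I • x)) := by
    have : (fun n => A (θ n)) = fun n => y n + Complex.I • ((θ n : H)) := by
      funext n
      have := hLapp (θ n); rw [hθ n] at this
      rw [this]; abel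
    rw [this]
    exact hyp.add (hx.const_smul _)
  have hgraph : (x, p + Complex.I • x) ∈ A.graph := by
    refine hclosed.mem_of_tendsto (hx.prodMk_nhds hAx) ?_
    exact Filter.Eventually.of_forall fun n => A.mem_graph (θ n)
  rw [LinearPMap.mem_graph_iff] at hgraph
  obtain ⟨u, hu1, hu2⟩ := hgraph
  refine ⟨u, ?_⟩
  simp only at hu1 hu2
  rw [hLapp, hu2, hu1]
  abel

/-- Proposition 4.3 (part 1): under the injection `Φ : φ ↦ φ̂`, `φ̂(z) := ⟨ξ(z̄), φ⟩`,
the operator `A` corresponds exactly to multiplication by the independent variable: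
(i) `(Aφ)^(z) = z·φ̂(z)` for `φ ∈ dom A`; (ii) conversely if `χ̂(z) = z·φ̂(z)` for all
`z`, then `φ ∈ dom A` and `Aφ = χ`. -/
theorem hat_map_intertwines_multiplication
    [TopologicalSpace.SeparableSpace H]
    (A : H →ₗ.[ℂ] H) (hA : IsSymClass A)
    (ξ : ℂ → H) (hξdiff : Differentiable ℂ ξ)
    (hdom : ∀ z : ℂ, ξ z ∈ A.adjoint.domain)
    (heig : ∀ z : ℂ, A.adjoint ⟨ξ z, hdom z⟩ = z • ξ z)
    (hξne : ∀ z : ℂ, ξ z ≠ 0) :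
    (∀ φ : A.domain, ∀ z : ℂ,
      (inner ℂ (ξ (conj z)) (A φ) : ℂ) = z * (inner ℂ (ξ (conj z)) (φ : H) : ℂ)) ∧
    (∀ φ χ : H, (∀ z : ℂ, (inner ℂ (ξ (conj z)) χ : ℂ) = z * (inner ℂ (ξ (conj z)) φ : ℂ)) →
      ∃ hφ : φ ∈ A.domain, A ⟨φ, hφ⟩ = χ) := by
  have hT : Dense (A.domain : Set H) := hA.dense
  have hpart1 := hat_part_one A hT ξ hdom heig
  refine ⟨hpart1, ?_⟩
  intro φ χ hz
  -- the operator L = A - i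
  set L : A.domain →ₗ[ℂ] H := A.toFun - Complex.I • A.domain.subtype with hLdef
  have hLapp : ∀ θ : A.domain, L θ = A θ - Complex.I • (θ : H) := fun θ => rfl
  -- lower bound for L
  have hlow : ∀ θ : A.domain, ‖(θ : H)‖ ≤ ‖L θ‖ := by
    intro θ
    have hreal : (inner ℂ (A θ) ((θ : H)) : ℂ).im = 0 := by
      have h2 : conj ((inner ℂ (A θ) ((θ : H)) : ℂ)) = inner ℂ (A θ) ((θ : H)) := by
        rw [inner_conj_symm]; exact (hA.symmetric θ θ).symm
      exact Complex.conj_eq_iff_im.mp h2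
    have hsq : ‖L θ‖ ^ 2 = ‖A θ‖ ^ 2 + ‖(θ : H)‖ ^ 2 := by
      rw [hLapp, @norm_sub_sq ℂ, inner_smul_right]
      simp [Complex.mul_re, hreal, norm_smul]
    have h2 : ‖(θ : H)‖ ^ 2 ≤ ‖L θ‖ ^ 2 := by nlinarith [sq_nonneg ‖A θ‖]
    exact le_of_pow_le_pow_left₀ two_ne_zero (norm_nonneg _) h2
  -- the range of L is closed
  have hRclosed := range_sub_i_closed A hA.closed L hLapp hlow
  set R : Submodule ℂ H := LinearMap.range L with hRdef
  -- χ - i φ is orthogonal to Rᗮ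
  set x₀ : H := χ - Complex.I • φ with hx₀def
  have hx₀mem : x₀ ∈ Rᗮᗮ := by
    rw [Submodule.mem_orthogonal]
    intro ψ hψ
    -- ψ is in the defect space at -i
    have hψorth : ∀ θ : A.domain, (inner ℂ (L θ) ψ : ℂ) = 0 := fun θ =>
      (Submodule.mem_orthogonal R ψ).mp hψ (L θ) (LinearMap.mem_range_self L θ)
    have hkey : ∀ θ : A.domain, (inner ℂ ((-Complex.I) • ψ) ((θ : H)) : ℂ) = inner ℂ ψ (A θ) := by
      intro θ
      have h1 := hψorth θ
      rw [hLapp, inner_sub_left, sub_eq_zero] at h1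
      have h2 := congrArg conj h1
      simp only [inner_conj_symm] at h2
      rw [h2, inner_smul_right, inner_smul_left]
      ring_nf
      simp
    have hmem : ψ ∈ A.adjoint.domain :=
      LinearPMap.mem_adjoint_domain_of_exists ψ ⟨(-Complex.I) • ψ, hkey⟩
    have happly : A.adjoint ⟨ψ, hmem⟩ = (-Complex.I) • ψ :=
      LinearPMap.adjoint_apply_eq hT ⟨ψ, hmem⟩ hkey
    have hψdef : ψ ∈ defectSet A (-Complex.I) := by
      show (ψ, (-Complex.I) • ψ) ∈ A.adjoint.graph
      rw [LinearPMap.mem_graph_iff]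
      exact ⟨⟨ψ, hmem⟩, rfl, happly⟩
    have him : (-Complex.I).im ≠ 0 := by simp
    obtain ⟨c, hc⟩ := scalar_of_defect (hA.deficiency _ him)
      (xi_mem_defect A ξ hdom heig (-Complex.I)) (hξne _) hψdef
    have hxi : (inner ℂ (ξ (-Complex.I)) x₀ : ℂ) = 0 := by
      have h3 := hz Complex.I
      rw [Complex.conj_I] at h3
      rw [hx₀def, inner_sub_right, inner_smul_right, h3, sub_self]
    rw [hc, inner_smul_left, hxi, mul_zero]
  -- hence χ - i φ is in the range of L
  have hx₀R : x₀ ∈ R := by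
    have := Submodule.orthogonal_orthogonal_eq_closure (K := R) ▸ hx₀mem
    have h4 : x₀ ∈ closure (R : Set H) := by
      rw [← R.topologicalClosure_coe]
      exact_mod_cast this
    rwa [hRclosed.closure_eq] at h4
  obtain ⟨η, hη⟩ := hx₀R
  -- A η = χ - i φ + i η
  have hAη : A η = χ - Complex.I • φ + Complex.I • (η : H) := by
    have := hLapp η
    rw [hη] at this
    rw [← hx₀def, this]; abel
  -- the function w ↦ ⟨ξ(w̄), η - φ⟩ vanishes
  set v : H := (η : H) - φ with hvdef
  have hfactor : ∀ w : ℂ, (w - Complex.I) * (inner ℂ (ξ (conj w)) v : ℂ) = 0 := by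
    intro w
    have h1 := hpart1 η w
    rw [hAη] at h1
    have h3 := hz w
    simp only [hvdef, inner_sub_right, inner_add_right, inner_smul_right] at h1 ⊢
    linear_combination h3 - h1
  have hgcont : Continuous fun w : ℂ => (inner ℂ (ξ (conj w)) v : ℂ) :=
    Continuous.inner (hξdiff.continuous.comp RCLike.continuous_conj) continuous_const
  have hgzero : (fun w : ℂ => (inner ℂ (ξ (conj w)) v : ℂ)) = fun _ => (0 : ℂ) := by
    refine Continuous.ext_on (dense_compl_singleton Complex.I) hgcont continuous_const ?_
    intro w hw
    have hwne : w - Complex.I ≠ 0 := sub_ne_zero.mpr hw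
    have := hfactor w
    exact (mul_eq_zero.mp this).resolve_left hwne
  have hv : ∀ u : ℂ, (inner ℂ (ξ u) v : ℂ) = 0 := by
    intro u
    have := congrFun hgzero (conj u)
    simpa [Complex.conj_conj] using this
  have hv0 : v = 0 := orth_xi_eq_zero A hA ξ hdom heig hξne v hv
  have hηφ : (η : H) = φ := by rwa [hvdef, sub_eq_zero] at hv0
  have hφmem : φ ∈ A.domain := hηφ ▸ η.2
  refine ⟨hφmem, ?_⟩
  have heq : (⟨φ, hφmem⟩ : A.domain) = η := Subtype.ext hηφ.symm
  rw [heq, hAη, hηφ]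
  abel

end
end

section
/- Let H₊ denote dom(A*) endowed with the graph inner product ⟨φ, ψ⟩₊ := ⟨φ, ψ⟩ + ⟨A*φ, A*ψ⟩. For an entire function f : ℂ → ℂ the following are equivalent: (i) there exist φ, ψ ∈ H such that f(z) = φ̂(z) + z·ψ̂(z) for every z ∈ ℂ (i.e. f belongs to Ĥ + zĤ, the set of functions associated to Ĥ); (ii) there exists a linear functional η : dom(A*) → ℂ, continuous with respect to the graph norm of H₊, such that f(z) = conj(η(ξ(z̄))) for every z ∈ ℂ. -/
open Complex ComplexConjugate

noncomputable section

variable {H : Type*} [NormedAddCommGroup H] [InnerProductSpace ℂ H] [CompleteSpace H]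

/-- A linear functional on `dom(A*)` is continuous with respect to the graph norm
`‖φ‖₊ = (‖φ‖² + ‖A*φ‖²)^{1/2}` of `H₊`. -/
def GraphNormContinuous (A : H →ₗ.[ℂ] H) (η : A.adjoint.domain →ₗ[ℂ] ℂ) : Prop :=
  ∃ C : ℝ, ∀ φ : A.adjoint.domain,
    ‖η φ‖ ≤ C * Real.sqrt (‖(φ : H)‖ ^ 2 + ‖A.adjoint φ‖ ^ 2)

/-- Proposition 5.1: an entire function `f` belongs to `assoc Ĥ = Ĥ + z Ĥ`
(i.e. `f(z) = φ̂(z) + z·ψ̂(z)` for some `φ, ψ ∈ H`) if and only if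
`f(z) = conj (η(ξ(z̄)))` for some graph-norm continuous linear functional `η` on
`dom(A*)`. -/
theorem assoc_hat_space_iff_graph_continuous_functional
    [TopologicalSpace.SeparableSpace H]
    (A : H →ₗ.[ℂ] H) (hA : IsSymClass A)
    (ξ : ℂ → H) (hξdiff : Differentiable ℂ ξ)
    (hdom : ∀ z : ℂ, ξ z ∈ A.adjoint.domain)
    (heig : ∀ z : ℂ, A.adjoint ⟨ξ z, hdom z⟩ = z • ξ z)
    (hξne : ∀ z : ℂ, ξ z ≠ 0)
    (f : ℂ → ℂ) (hf : Differentiable ℂ f) :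
    (∃ φ ψ : H, ∀ z : ℂ,
        f z = (inner ℂ (ξ (conj z)) φ : ℂ) + z * (inner ℂ (ξ (conj z)) ψ : ℂ)) ↔
    (∃ η : A.adjoint.domain →ₗ[ℂ] ℂ, GraphNormContinuous A η ∧
        ∀ z : ℂ, f z = conj (η ⟨ξ (conj z), hdom (conj z)⟩)) := by
  constructor
  · rintro ⟨φ, ψ, hφψ⟩
    refine ⟨((innerSL ℂ φ).toLinearMap.comp A.adjoint.domain.subtype) +
      ((innerSL ℂ ψ).toLinearMap.comp A.adjoint.toFun), ⟨‖φ‖ + ‖ψ‖, fun x => ?_⟩, fun z => ?_⟩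
    · have hs0 : (0:ℝ) ≤ Real.sqrt (‖(x : H)‖ ^ 2 + ‖A.adjoint x‖ ^ 2) := Real.sqrt_nonneg _
      have h1 : ‖(x : H)‖ ≤ Real.sqrt (‖(x : H)‖ ^ 2 + ‖A.adjoint x‖ ^ 2) :=
        (Real.le_sqrt (norm_nonneg _) (by positivity)).2 (by nlinarith [sq_nonneg ‖A.adjoint x‖])
      have h2 : ‖A.adjoint x‖ ≤ Real.sqrt (‖(x : H)‖ ^ 2 + ‖A.adjoint x‖ ^ 2) :=
        (Real.le_sqrt (norm_nonneg _) (by positivity)).2 (by nlinarith [sq_nonneg ‖(x : H)‖])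
      simp only [LinearMap.add_apply, LinearMap.coe_comp, Function.comp_apply,
        ContinuousLinearMap.coe_coe, innerSL_apply_apply, Submodule.subtype_apply,
        LinearPMap.toFun_eq_coe]
      calc ‖(inner ℂ φ (x : H) : ℂ) + (inner ℂ ψ (A.adjoint x : H) : ℂ)‖
          ≤ ‖(inner ℂ φ (x : H) : ℂ)‖ + ‖(inner ℂ ψ (A.adjoint x : H) : ℂ)‖ := norm_add_le _ _
        _ ≤ ‖φ‖ * ‖(x : H)‖ + ‖ψ‖ * ‖A.adjoint x‖ := by
            gcongr <;> exact norm_inner_le_norm _ _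
        _ ≤ (‖φ‖ + ‖ψ‖) * Real.sqrt (‖(x : H)‖ ^ 2 + ‖A.adjoint x‖ ^ 2) := by
            have hφ0 : (0:ℝ) ≤ ‖φ‖ := norm_nonneg _
            have hψ0 : (0:ℝ) ≤ ‖ψ‖ := norm_nonneg _
            nlinarith
    · simp only [LinearMap.add_apply, LinearMap.coe_comp, Function.comp_apply,
        ContinuousLinearMap.coe_coe, innerSL_apply_apply, Submodule.subtype_apply,
        LinearPMap.toFun_eq_coe]
      rw [heig (conj z), inner_smul_right, map_add, map_mul, inner_conj_symm,
        inner_conj_symm, Complex.conj_conj, hφψ z]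
  · rintro ⟨η, ⟨C, hC⟩, hη⟩
    set T : A.adjoint.domain →ₗ[ℂ] WithLp 2 (H × H) :=
      (WithLp.linearEquiv 2 ℂ (H × H)).symm.toLinearMap.comp
        (A.adjoint.domain.subtype.prod A.adjoint.toFun) with hT
    have hTfst : ∀ x : A.adjoint.domain, (T x).fst = (x : H) := fun x => rfl
    have hTsnd : ∀ x : A.adjoint.domain, (T x).snd = A.adjoint x := fun x => rfl
    have hTnorm : ∀ x : A.adjoint.domain,
        ‖T x‖ = Real.sqrt (‖(x : H)‖ ^ 2 + ‖A.adjoint x‖ ^ 2) := by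
      intro x
      rw [WithLp.prod_norm_eq_of_L2, hTfst, hTsnd]
    have hTinj : Function.Injective T := by
      intro x y hxy
      have h1 : (T x).fst = (T y).fst := by rw [hxy]
      rw [hTfst, hTfst] at h1
      exact Subtype.ext h1
    set e := LinearEquiv.ofInjective T hTinj with he
    have hTe : ∀ y : LinearMap.range T, T (e.symm y) = (y : WithLp 2 (H × H)) := by
      intro y
      conv_rhs => rw [← e.apply_symm_apply y]
      rw [he, LinearEquiv.ofInjective_apply]
    have hbound : ∀ y : LinearMap.range T,
        ‖(η.comp e.symm.toLinearMap) y‖ ≤ (max C 0) * ‖y‖ := by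
      intro y
      have h1 := hC (e.symm y)
      rw [← hTnorm, hTe] at h1
      exact h1.trans (mul_le_mul_of_nonneg_right (le_max_left _ _) (norm_nonneg _))
    set g : (LinearMap.range T) →L[ℂ] ℂ :=
      LinearMap.mkContinuous (η.comp e.symm.toLinearMap) (max C 0) hbound with hg
    obtain ⟨G, hGext, -⟩ := exists_extension_norm_eq (LinearMap.range T) g
    obtain ⟨w, hw⟩ := (InnerProductSpace.toDual ℂ (WithLp 2 (H × H))).surjective G
    refine ⟨w.fst, w.snd, fun z => ?_⟩
    have key : ∀ x : A.adjoint.domain,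
        η x = (inner ℂ w.fst (x : H) : ℂ) + (inner ℂ w.snd (A.adjoint x : H) : ℂ) := by
      intro x
      have h1 : η x = g ⟨T x, LinearMap.mem_range_self T x⟩ := by
        rw [hg]
        simp only [LinearMap.mkContinuous_apply, LinearMap.comp_apply, LinearEquiv.coe_coe]
        congr 1
        apply hTinj
        rw [hTe ⟨T x, LinearMap.mem_range_self T x⟩]
      rw [h1, ← hGext, ← hw, InnerProductSpace.toDual_apply_apply, WithLp.prod_inner_apply]
      rfl
    rw [hη z, key ⟨ξ (conj z), hdom (conj z)⟩, heig (conj z), inner_smul_right,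
      map_add, map_mul, inner_conj_symm, inner_conj_symm, Complex.conj_conj]


end
end
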